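/- Let k ≥ 3 and p ≥ 1 be integers and let a, b, c, d ∈ ℝ with b > 0 and a + c < 1. Suppose that (i) W_k(a,b,c,d) is positive semidefinite, (ii) 2b + 2c − d ≤ 1, and (iii) both w_{k−1}((a−c)/b, d/b) and w_{k−1}((a−c)/(1−a−c), (b−a+c)/(1−a−c)) belong to LS+^{p−1}(H_{k−1}). Then w_k(a,b) ∈ LS+^p(H_k). -/

import Mathlib

open Finset

noncomputable section

/-- `cone(P)`: the homogenization of `P`, indexed by `Option V` with `none` playing
the role of the `0` coordinate. -/
def lsCone {V : Type*} (P : Set (V → ℝ)) : Set (Option V → ℝ) :=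
  {y | ∃ (lam : ℝ) (x : V → ℝ), 0 ≤ lam ∧ x ∈ P ∧
    y = fun o => o.elim lam (fun v => lam * x v)}

/-- The lift `LŜ₊(P)`: symmetric PSD matrices `Y` indexed by `Option V`
with `Y e₀ = diag Y` and all columns conditions. -/
def lsLift {V : Type*} [Fintype V] [DecidableEq V] (P : Set (V → ℝ)) :
    Set (Matrix (Option V) (Option V) ℝ) :=
  {Y | Y.PosSemidef ∧ Y.mulVec (Pi.single none 1) = Matrix.diag Y ∧
      ∀ v : V, Y.mulVec (Pi.single (some v) 1) ∈ lsCone P ∧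
        Y.mulVec (Pi.single none 1 - Pi.single (some v) 1) ∈ lsCone P}

/-- The Lovász–Schrijver operator `LS₊`. -/
def lsPlus {V : Type*} [Fintype V] [DecidableEq V] (P : Set (V → ℝ)) : Set (V → ℝ) :=
  {x | ∃ Y ∈ lsLift P, Y.mulVec (Pi.single none 1) = fun o => o.elim 1 x}

/-- The fractional stable set polytope. -/
def FRAC {V : Type*} (G : SimpleGraph V) : Set (V → ℝ) :=
  {x | (∀ v, 0 ≤ x v ∧ x v ≤ 1) ∧ ∀ u v, G.Adj u v → x u + x v ≤ 1}

/-- The stable set polytope: convex hull of incidence vectors of stable sets. -/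
def STAB {V : Type*} (G : SimpleGraph V) : Set (V → ℝ) :=
  convexHull ℝ {x | ∃ S : Set V, (∀ u ∈ S, ∀ v ∈ S, ¬ G.Adj u v) ∧
    x = S.indicator fun _ => (1 : ℝ)}

/-- The graph `H_k`, on vertex set `Fin k × Fin 3` (vertex `i_p` is `(i, p)`). -/
def Hgraph (k : ℕ) : SimpleGraph (Fin k × Fin 3) :=
  SimpleGraph.fromRel (fun a b =>
    (a.1 = b.1 ∧ ((a.2 = 0 ∧ b.2 = 1) ∨ (a.2 = 1 ∧ b.2 = 2))) ∨
    (a.1 ≠ b.1 ∧ a.2 = 0 ∧ b.2 = 2))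

/-- The vector `w_k(a,b)`: entry `a` on `[k]₀ ∪ [k]₂` and `b` on `[k]₁`. -/
def wVec (k : ℕ) (a b : ℝ) : Fin k × Fin 3 → ℝ := fun v => if v.2 = 1 then b else a

/-- The certificate matrix `W_k(a,b,c,d)`, indexed by `Option (Fin k × Fin 3)`
with `none` playing the role of the index `0`. -/
def Wmat (k : ℕ) (a b c d : ℝ) :
    Matrix (Option (Fin k × Fin 3)) (Option (Fin k × Fin 3)) ℝ :=
  fun r s =>
    match r, s with
    | none, none => 1
    | none, some v => if v.2 = 1 then b else a
    | some v, none => if v.2 = 1 then b else a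
    | some v, some u =>
      if v.1 = u.1 then
        (if v.2 = u.2 then (if v.2 = 1 then b else a)
         else if v.2 ≠ 1 ∧ u.2 ≠ 1 then a - c else 0)
      else
        (if v.2 = u.2 then (if v.2 = 1 then d else c)
         else if v.2 = 1 ∨ u.2 = 1 then a - c else 0)


set_option linter.unusedSectionVars false
set_option maxHeartbeats 1000000

section Aux
variable {V : Type*} [Fintype V] [DecidableEq V]

lemma mulVec_col (M : Matrix (Option V) (Option V) ℝ) (j : Option V) :
    M.mulVec (Pi.single j 1) = fun i => M i j := by
  funext i
  simp [Matrix.mulVec, dotProduct, Pi.single_apply, mul_ite]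

lemma mulVec_col_sub (M : Matrix (Option V) (Option V) ℝ) (j j' : Option V) :
    M.mulVec (Pi.single j 1 - Pi.single j' 1) = fun i => M i j - M i j' := by
  rw [Matrix.mulVec_sub, mulVec_col, mulVec_col]
  funext i; simp

def elemV (lam : ℝ) (x : V → ℝ) : Option V → ℝ := fun o => o.elim lam fun v => lam * x v

lemma elem_mem_lsCone {P : Set (V → ℝ)} {lam : ℝ} {x : V → ℝ}
    (hlam : 0 ≤ lam) (hx : x ∈ P) : elemV lam x ∈ lsCone P := ⟨lam, x, hlam, hx, rfl⟩

lemma lsCone_add {P : Set (V → ℝ)} (hP : Convex ℝ P) {y z : Option V → ℝ}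
    (hy : y ∈ lsCone P) (hz : z ∈ lsCone P) : y + z ∈ lsCone P := by
  obtain ⟨l1, x1, hl1, hx1, rfl⟩ := hy
  obtain ⟨l2, x2, hl2, hx2, rfl⟩ := hz
  rcases eq_or_lt_of_le hl1 with h1 | h1
  · refine ⟨l2, x2, hl2, hx2, ?_⟩
    funext o; cases o <;> simp [← h1]
  rcases eq_or_lt_of_le hl2 with h2 | h2
  · refine ⟨l1, x1, hl1, hx1, ?_⟩
    funext o; cases o <;> simp [← h2]
  have hs : 0 < l1 + l2 := by linarith
  refine ⟨l1 + l2, (l1/(l1+l2)) • x1 + (l2/(l1+l2)) • x2, le_of_lt hs,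
    hP hx1 hx2 (by positivity) (by positivity) (by field_simp), ?_⟩
  funext o
  cases o with
  | none => simp
  | some v =>
    simp only [Option.elim, Pi.add_apply, Pi.smul_apply, smul_eq_mul]
    field_simp

lemma lsCone_smul {P : Set (V → ℝ)} {θ : ℝ} (hθ : 0 ≤ θ) {y : Option V → ℝ}
    (hy : y ∈ lsCone P) : θ • y ∈ lsCone P := by
  obtain ⟨l, x, hl, hx, rfl⟩ := hy
  exact ⟨θ * l, x, mul_nonneg hθ hl, hx, by funext o; cases o <;> simp [mul_assoc]⟩

lemma lsCone_mono {P Q : Set (V → ℝ)} (h : P ⊆ Q) : lsCone P ⊆ lsCone Q := by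
  rintro y ⟨l, x, hl, hx, rfl⟩
  exact ⟨l, x, hl, h hx, rfl⟩

lemma FRAC_convex {V' : Type*} (G : SimpleGraph V') : Convex ℝ (FRAC G) := by
  intro x hx y hy s t hs ht hst
  constructor
  · intro v
    have h1 := hx.1 v; have h2 := hy.1 v
    simp only [Pi.add_apply, Pi.smul_apply, smul_eq_mul]
    constructor <;> nlinarith [h1.1, h1.2, h2.1, h2.2]
  · intro u v huv
    have e1 := hx.2 u v huv; have e2 := hy.2 u v huv
    simp only [Pi.add_apply, Pi.smul_apply, smul_eq_mul]
    nlinarith [e1, e2]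

end Aux

section Aux2
variable {V : Type*} [Fintype V] [DecidableEq V]

lemma lsPlus_convex {P : Set (V → ℝ)} (hP : Convex ℝ P) : Convex ℝ (lsPlus P) := by
  rintro x ⟨Y1, ⟨hpsd1, hdiag1, hcols1⟩, he1⟩ y ⟨Y2, ⟨hpsd2, hdiag2, hcols2⟩, he2⟩ s t hs ht hst
  refine ⟨s • Y1 + t • Y2, ⟨?_, ?_, fun v => ⟨?_, ?_⟩⟩, ?_⟩
  · refine Matrix.PosSemidef.of_dotProduct_mulVec_nonneg ?_ ?_
    · have i1 := hpsd1.1; have i2 := hpsd2.1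
      unfold Matrix.IsHermitian at *
      funext r u
      have e1 := congrFun (congrFun i1 r) u
      have e2 := congrFun (congrFun i2 r) u
      simp only [Matrix.conjTranspose_apply, star_trivial] at e1 e2 ⊢
      simp [Matrix.add_apply, Matrix.smul_apply, e1, e2]
    · intro z
      have q1 := hpsd1.dotProduct_mulVec_nonneg z; have q2 := hpsd2.dotProduct_mulVec_nonneg z
      simp only [Matrix.add_mulVec, Matrix.smul_mulVec, dotProduct_add,
        dotProduct_smul, smul_eq_mul]
      nlinarith [mul_nonneg hs q1, mul_nonneg ht q2]
  · rw [Matrix.add_mulVec, Matrix.smul_mulVec, Matrix.smul_mulVec, hdiag1, hdiag2]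
    funext o
    simp [Matrix.diag]
  · rw [Matrix.add_mulVec, Matrix.smul_mulVec, Matrix.smul_mulVec]
    exact lsCone_add hP (lsCone_smul hs ((hcols1 v).1)) (lsCone_smul ht ((hcols2 v).1))
  · rw [Matrix.add_mulVec, Matrix.smul_mulVec, Matrix.smul_mulVec]
    exact lsCone_add hP (lsCone_smul hs ((hcols1 v).2)) (lsCone_smul ht ((hcols2 v).2))
  · rw [Matrix.add_mulVec, Matrix.smul_mulVec, Matrix.smul_mulVec, he1, he2]
    funext o
    cases o with
    | none => simp [hst]
    | some u => simp
end Aux2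
section Aux3
variable {V : Type*} [Fintype V] [DecidableEq V]

lemma lsPlus_subset [Nonempty V] {P : Set (V → ℝ)} (hP : Convex ℝ P) : lsPlus P ⊆ P := by
  rintro x ⟨Y, ⟨hpsd, hdiag, hcols⟩, he⟩
  obtain ⟨v⟩ := ‹Nonempty V›
  obtain ⟨⟨l1, y1, hl1, hy1, hc1⟩, ⟨l2, y2, hl2, hy2, hc2⟩⟩ := hcols v
  rw [mulVec_col] at he hc1
  rw [mulVec_col_sub] at hc2
  have h0 : ∀ o, Y o none = (Option.elim o 1 x : ℝ) := congrFun he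
  have hA : ∀ o, Y o (some v) = (Option.elim o l1 fun u => l1 * y1 u : ℝ) := congrFun hc1
  have hB : ∀ o, Y o none - Y o (some v) = (Option.elim o l2 fun u => l2 * y2 u : ℝ) :=
    congrFun hc2
  have hsum : l1 + l2 = 1 := by
    have := hB none; have := hA none; have := h0 none
    simp only [Option.elim] at *
    linarith
  have hx : x = l1 • y1 + l2 • y2 := by
    funext u
    have e0 := h0 (some u); have eA := hA (some u); have eB := hB (some u)
    simp only [Option.elim] at e0 eA eB
    simp only [Pi.add_apply, Pi.smul_apply, smul_eq_mul]
    linarith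
  rw [hx]
  exact hP hy1 hy2 hl1 hl2 hsum

lemma lsPlus_mono {P Q : Set (V → ℝ)} (h : P ⊆ Q) : lsPlus P ⊆ lsPlus Q := by
  rintro x ⟨Y, ⟨hpsd, hdiag, hcols⟩, he⟩
  exact ⟨Y, ⟨hpsd, hdiag, fun v =>
    ⟨lsCone_mono h (hcols v).1, lsCone_mono h (hcols v).2⟩⟩, he⟩

lemma iter_convex (G : SimpleGraph V) (q : ℕ) :
    Convex ℝ ((lsPlus (V := V))^[q] (FRAC G)) := by
  induction q with
  | zero => exact FRAC_convex G
  | succ q ih => rw [Function.iterate_succ_apply']; exact lsPlus_convex ih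

lemma iter_succ_subset [Nonempty V] (G : SimpleGraph V) (q : ℕ) :
    (lsPlus (V := V))^[q+1] (FRAC G) ⊆ (lsPlus (V := V))^[q] (FRAC G) := by
  rw [Function.iterate_succ_apply']
  exact lsPlus_subset (iter_convex G q)

lemma iter_subset_frac [Nonempty V] (G : SimpleGraph V) (q : ℕ) :
    (lsPlus (V := V))^[q] (FRAC G) ⊆ FRAC G := by
  induction q with
  | zero => exact subset_rfl
  | succ q ih => exact (iter_succ_subset G q).trans ih

lemma binary_mem_iter {G : SimpleGraph V} {x : V → ℝ}
    (h01 : ∀ v, x v = 0 ∨ x v = 1) (hx : x ∈ FRAC G) (q : ℕ) :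
    x ∈ (lsPlus (V := V))^[q] (FRAC G) := by
  induction q with
  | zero => exact hx
  | succ q ih =>
    rw [Function.iterate_succ_apply']
    set x' : Option V → ℝ := fun o => o.elim 1 x with hx'
    have hx0 : ∀ v, 0 ≤ x v := fun v => by rcases h01 v with h | h <;> rw [h] <;> norm_num
    have hx1 : ∀ v, x v ≤ 1 := fun v => by rcases h01 v with h | h <;> rw [h] <;> norm_num
    set M : Matrix (Option V) (Option V) ℝ := Matrix.of (fun r s => x' r * x' s) with hM
    have hMapp : ∀ r s, M r s = x' r * x' s := fun r s => rfl
    refine ⟨M, ⟨Matrix.PosSemidef.of_dotProduct_mulVec_nonneg ?_ ?_, ?_, fun v => ⟨?_, ?_⟩⟩, ?_⟩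
    · funext r s
      simp only [Matrix.conjTranspose_apply, star_trivial, hMapp]
      ring
    · intro z
      have : dotProduct (star z) (M.mulVec z)
          = (∑ s, x' s * z s) * (∑ s, x' s * z s) := by
        simp only [dotProduct, Matrix.mulVec, hM, Matrix.of_apply, Pi.star_apply, star_trivial]
        rw [Finset.sum_mul]
        refine Finset.sum_congr rfl fun r _ => ?_
        rw [Finset.mul_sum, Finset.mul_sum]
        refine Finset.sum_congr rfl fun s _ => ?_
        ring
      rw [this]
      exact mul_self_nonneg _
    · rw [mulVec_col]
      funext o
      cases o with
      | none => simp [Matrix.diag, hMapp, hx']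
      | some v =>
        simp only [Matrix.diag, hMapp, hx', Option.elim]
        rcases h01 v with h | h <;> rw [h] <;> norm_num
    · rw [mulVec_col]
      have : (fun o => M o (some v)) = elemV (x v) x := by
        funext o
        cases o <;> simp [elemV, hMapp, hx'] <;> ring
      rw [this]
      exact elem_mem_lsCone (hx0 v) ih
    · rw [mulVec_col_sub]
      have : (fun o => M o none - M o (some v)) = elemV (1 - x v) x := by
        funext o
        cases o <;> simp [elemV, hMapp, hx'] <;> ring
      rw [this]
      refine elem_mem_lsCone (by linarith [hx1 v]) ih
    · rw [mulVec_col]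
      funext o
      cases o <;> simp [hMapp, hx']
end Aux3

section Graph

lemma fin3cases : ∀ s : Fin 3, s = 0 ∨ s = 1 ∨ s = 2 := by decide

lemma hgraph_adj {k : ℕ} {u v : Fin k × Fin 3} :
    (Hgraph k).Adj u v ↔ u ≠ v ∧
      ((u.1 = v.1 ∧ ((u.2 = 0 ∧ v.2 = 1) ∨ (u.2 = 1 ∧ v.2 = 2) ∨ (v.2 = 0 ∧ u.2 = 1) ∨ (v.2 = 1 ∧ u.2 = 2))) ∨
       (u.1 ≠ v.1 ∧ ((u.2 = 0 ∧ v.2 = 2) ∨ (v.2 = 0 ∧ u.2 = 2)))) := by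
  simp only [Hgraph, SimpleGraph.fromRel_adj, ne_eq]
  constructor
  · rintro ⟨hne, h | h⟩
    · rcases h with ⟨h1, h2⟩ | ⟨h1, h2, h3⟩
      · exact ⟨hne, Or.inl ⟨h1, by tauto⟩⟩
      · exact ⟨hne, Or.inr ⟨h1, Or.inl ⟨h2, h3⟩⟩⟩
    · rcases h with ⟨h1, h2⟩ | ⟨h1, h2, h3⟩
      · exact ⟨hne, Or.inl ⟨h1.symm, by tauto⟩⟩
      · exact ⟨hne, Or.inr ⟨fun hh => h1 hh.symm, Or.inr ⟨h2, h3⟩⟩⟩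
  · rintro ⟨hne, ⟨h1, hp⟩ | ⟨h1, hp⟩⟩
    · refine ⟨hne, ?_⟩
      rcases hp with ⟨ha, hb⟩ | ⟨ha, hb⟩ | ⟨ha, hb⟩ | ⟨ha, hb⟩
      · exact Or.inl (Or.inl ⟨h1, Or.inl ⟨ha, hb⟩⟩)
      · exact Or.inl (Or.inl ⟨h1, Or.inr ⟨ha, hb⟩⟩)
      · exact Or.inr (Or.inl ⟨h1.symm, Or.inl ⟨ha, hb⟩⟩)
      · exact Or.inr (Or.inl ⟨h1.symm, Or.inr ⟨ha, hb⟩⟩)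
    · rcases hp with ⟨ha, hb⟩ | ⟨ha, hb⟩
      · exact ⟨hne, Or.inl (Or.inr ⟨h1, ha, hb⟩)⟩
      · exact ⟨hne, Or.inr (Or.inr ⟨fun hh => h1 hh.symm, ha, hb⟩)⟩

lemma adj_snd_ne {k : ℕ} {u v : Fin k × Fin 3} (h : (Hgraph k).Adj u v) : u.2 ≠ v.2 := by
  rcases (hgraph_adj.mp h).2 with ⟨_, hp⟩ | ⟨_, hp⟩
  · rcases hp with ⟨h1, h2⟩ | ⟨h1, h2⟩ | ⟨h1, h2⟩ | ⟨h1, h2⟩ <;> rw [h1, h2] <;> decide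
  · rcases hp with ⟨h1, h2⟩ | ⟨h1, h2⟩ <;> rw [h1, h2] <;> decide

lemma adj01 {k : ℕ} (i : Fin k) : (Hgraph k).Adj (i, 0) (i, 1) := by
  rw [hgraph_adj]
  refine ⟨fun h => ?_, Or.inl ⟨rfl, Or.inl ⟨rfl, rfl⟩⟩⟩
  have := congrArg Prod.snd h
  simp at this

end Graph

section Embed
variable {m : ℕ}

def embV (i : Fin (m+2)) (j : Fin (m+1)) : Fin (m+2) :=
  ⟨if j.val < i.val then j.val else j.val + 1, by have := j.isLt; split <;> omega⟩

def unembV (i v : Fin (m+2)) : Fin (m+1) :=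
  ⟨if v.val < i.val then v.val else v.val - 1, by have := v.isLt; have := i.isLt; split <;> omega⟩

lemma embV_ne (i : Fin (m+2)) (j : Fin (m+1)) : embV i j ≠ i := by
  intro h
  have h' := congrArg Fin.val h
  simp only [embV] at h'
  split at h' <;> omega

lemma unembV_embV (i : Fin (m+2)) (j : Fin (m+1)) : unembV i (embV i j) = j := by
  apply Fin.ext
  simp only [unembV, embV]
  split_ifs <;> omega

lemma embV_unembV {i v : Fin (m+2)} (h : v ≠ i) : embV i (unembV i v) = v := by
  have hv : v.val ≠ i.val := fun hh => h (Fin.ext hh)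
  have := v.isLt
  apply Fin.ext
  simp only [embV, unembV]
  split_ifs <;> omega

lemma unembV_inj {i u v : Fin (m+2)} (hu : u ≠ i) (hv : v ≠ i)
    (h : unembV i u = unembV i v) : u = v := by
  rw [← embV_unembV hu, ← embV_unembV hv, h]

def embPt (i : Fin (m+2)) (t : Bool) (x : Fin (m+1) × Fin 3 → ℝ) : Fin (m+2) × Fin 3 → ℝ :=
  fun v => if v.1 = i then (if t = true ∧ v.2 = 1 then 1 else 0) else x (unembV i v.1, v.2)

lemma adj_unemb {i : Fin (m+2)} {u v : Fin (m+2) × Fin 3} (hu : u.1 ≠ i) (hv : v.1 ≠ i)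
    (h : (Hgraph (m+2)).Adj u v) :
    (Hgraph (m+1)).Adj (unembV i u.1, u.2) (unembV i v.1, v.2) := by
  rw [hgraph_adj] at h ⊢
  obtain ⟨hne, hcase⟩ := h
  refine ⟨?_, ?_⟩
  · intro hh
    rw [Prod.ext_iff] at hh
    exact hne (Prod.ext_iff.mpr ⟨unembV_inj hu hv hh.1, hh.2⟩)
  · rcases hcase with ⟨h1, hp⟩ | ⟨h1, hp⟩
    · exact Or.inl ⟨by rw [h1], hp⟩
    · exact Or.inr ⟨fun hh => h1 (unembV_inj hu hv hh), hp⟩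

def embO (i : Fin (m+2)) (t : Bool) :
    Option (Fin (m+2) × Fin 3) → Option (Option (Fin (m+1) × Fin 3))
  | none => some none
  | some v => if v.1 = i then (if t = true ∧ v.2 = 1 then some none else none)
              else some (some (unembV i v.1, v.2))

lemma embO_none (i : Fin (m+2)) (t : Bool) : embO i t none = some none := rfl

lemma embO_old {i : Fin (m+2)} {t : Bool} {v : Fin (m+2) × Fin 3} (h : v.1 ≠ i) :
    embO i t (some v) = some (some (unembV i v.1, v.2)) := by simp [embO, h]

lemma embO_one {i : Fin (m+2)} {t : Bool} {v : Fin (m+2) × Fin 3} (h : v.1 = i)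
    (ht : t = true ∧ v.2 = 1) : embO i t (some v) = some none := by simp [embO, h, ht]

lemma embO_zero {i : Fin (m+2)} {t : Bool} {v : Fin (m+2) × Fin 3} (h : v.1 = i)
    (ht : ¬(t = true ∧ v.2 = 1)) : embO i t (some v) = none := by simp [embO, h, ht]

def embN (i : Fin (m+2)) (t : Bool) :
    Matrix (Option (Fin (m+2) × Fin 3)) (Option (Fin (m+1) × Fin 3)) ℝ :=
  Matrix.of fun r c => if embO i t r = some c then 1 else 0

def embMat (i : Fin (m+2)) (t : Bool)
    (Y : Matrix (Option (Fin (m+1) × Fin 3)) (Option (Fin (m+1) × Fin 3)) ℝ) :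
    Matrix (Option (Fin (m+2) × Fin 3)) (Option (Fin (m+2) × Fin 3)) ℝ :=
  Matrix.of fun r s => (embO i t r).elim 0 fun r' => (embO i t s).elim 0 fun s' => Y r' s'

lemma sumCollapse {α : Type*} [Fintype α] [DecidableEq α] (o : Option α) (f : α → ℝ) :
    (∑ c : α, (if o = some c then (1:ℝ) else 0) * f c) = o.elim 0 f := by
  cases o with
  | none => simp
  | some a =>
    simp only [Option.some.injEq, Option.elim, ite_mul, one_mul, zero_mul]
    rw [Finset.sum_ite_eq]
    simp

lemma embMat_eq (i : Fin (m+2)) (t : Bool)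
    (Y : Matrix (Option (Fin (m+1) × Fin 3)) (Option (Fin (m+1) × Fin 3)) ℝ) :
    embMat i t Y = embN i t * Y * (embN i t).conjTranspose := by
  funext r s
  simp only [Matrix.mul_apply, Matrix.conjTranspose_apply, star_trivial, embN, Matrix.of_apply]
  have e1 : ∀ d, (∑ c, (if embO i t r = some c then (1:ℝ) else 0) * Y c d)
      = (embO i t r).elim 0 fun r' => Y r' d := fun d => sumCollapse _ _
  simp only [e1]
  have e2 : (∑ d, ((embO i t r).elim 0 fun r' => Y r' d) * (if embO i t s = some d then (1:ℝ) else 0))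
      = ∑ d, (if embO i t s = some d then (1:ℝ) else 0) * ((embO i t r).elim 0 fun r' => Y r' d) :=
    Finset.sum_congr rfl fun d _ => mul_comm _ _
  rw [e2, sumCollapse]
  rcases hr : embO i t r with _ | r1 <;> rcases hs : embO i t s with _ | s1 <;>
    simp [embMat, hr, hs]

end Embed
section EmbedIter
variable {m : ℕ}

lemma embPt_frac (i : Fin (m+2)) (t : Bool) {x : Fin (m+1) × Fin 3 → ℝ}
    (hx : x ∈ FRAC (Hgraph (m+1))) : embPt i t x ∈ FRAC (Hgraph (m+2)) := by
  constructor
  · intro v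
    by_cases hvi : v.1 = i
    · simp only [embPt, hvi, if_pos]
      split <;> norm_num
    · simp only [embPt, hvi, if_neg, ite_false]
      exact hx.1 _
  · intro u v hadj
    by_cases hui : u.1 = i <;> by_cases hvi : v.1 = i
    · -- both in block i
      obtain ⟨hne, hcase⟩ := hgraph_adj.mp hadj
      rcases hcase with ⟨h1, hp⟩ | ⟨h1, hp⟩
      · have hb0 : ∀ w : Fin (m+2) × Fin 3, w.1 = i → embPt i t x w ≤ 1 := by
          intro w hw
          simp only [embPt, hw, if_pos]
          split <;> norm_num
        have hz : ∀ w : Fin (m+2) × Fin 3, w.1 = i → w.2 ≠ 1 → embPt i t x w = 0 := by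
          intro w hw hw2
          simp only [embPt, hw, if_pos]
          rw [if_neg]
          rintro ⟨_, h⟩
          exact hw2 h
        rcases hp with ⟨ha, hb⟩ | ⟨ha, hb⟩ | ⟨ha, hb⟩ | ⟨ha, hb⟩
        · have := hz u hui (by rw [ha]; decide)
          have := hb0 v hvi
          linarith
        · have := hz v hvi (by rw [hb]; decide)
          have := hb0 u hui
          linarith
        · have := hz v hvi (by rw [ha]; decide)
          have := hb0 u hui
          linarith
        · have := hz u hui (by rw [hb]; decide)
          have := hb0 v hvi
          linarith
      · exact absurd (hui.trans hvi.symm) h1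
    · -- u in block i, v old : cross edge, u.2 ≠ 1
      obtain ⟨hne, hcase⟩ := hgraph_adj.mp hadj
      have hu2 : u.2 ≠ 1 := by
        rcases hcase with ⟨h1, _⟩ | ⟨_, hp⟩
        · exact absurd (h1.symm.trans hui) hvi
        · rcases hp with ⟨ha, _⟩ | ⟨_, hb⟩
          · rw [ha]; decide
          · rw [hb]; decide
      have e1 : embPt i t x u = 0 := by
        simp only [embPt, hui, if_pos]
        rw [if_neg]
        rintro ⟨_, h⟩
        exact hu2 h
      have e2 : embPt i t x v ≤ 1 := by
        simp only [embPt, hvi, if_neg, ite_false]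
        exact (hx.1 _).2
      linarith
    · -- v in block i, u old
      obtain ⟨hne, hcase⟩ := hgraph_adj.mp hadj
      have hv2 : v.2 ≠ 1 := by
        rcases hcase with ⟨h1, _⟩ | ⟨_, hp⟩
        · exact absurd (h1.trans hvi) hui
        · rcases hp with ⟨_, hb⟩ | ⟨ha, _⟩
          · rw [hb]; decide
          · rw [ha]; decide
      have e1 : embPt i t x v = 0 := by
        simp only [embPt, hvi, if_pos]
        rw [if_neg]
        rintro ⟨_, h⟩
        exact hv2 h
      have e2 : embPt i t x u ≤ 1 := by
        simp only [embPt, hui, if_neg, ite_false]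
        exact (hx.1 _).2
      linarith
    · simp only [embPt, hui, hvi, if_neg, ite_false]
      exact hx.2 _ _ (adj_unemb hui hvi hadj)

end EmbedIter
section EmbedIter2
variable {m : ℕ}

theorem embPt_iter (i : Fin (m+2)) (t : Bool) (q : ℕ) :
    ∀ x : Fin (m+1) × Fin 3 → ℝ,
      x ∈ (lsPlus (V := Fin (m+1) × Fin 3))^[q] (FRAC (Hgraph (m+1))) →
      embPt i t x ∈ (lsPlus (V := Fin (m+2) × Fin 3))^[q] (FRAC (Hgraph (m+2))) := by
  induction q with
  | zero => exact fun x hx => embPt_frac i t hx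
  | succ q ih =>
    intro x hx
    rw [Function.iterate_succ_apply'] at hx ⊢
    have hxq : x ∈ (lsPlus (V := Fin (m+1) × Fin 3))^[q] (FRAC (Hgraph (m+1))) :=
      lsPlus_subset (iter_convex _ q) hx
    have hembq : embPt i t x ∈ (lsPlus (V := Fin (m+2) × Fin 3))^[q] (FRAC (Hgraph (m+2))) :=
      ih x hxq
    obtain ⟨Y, ⟨hpsd, hdiag, hcols⟩, he⟩ := hx
    rw [mulVec_col] at he hdiag
    have hY0 : ∀ o, Y o none = (Option.elim o 1 x : ℝ) := congrFun he
    have hd : ∀ o, Y o none = Y o o := fun o => (congrFun hdiag o)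
    refine ⟨embMat i t Y, ⟨?_, ?_, ?_⟩, ?_⟩
    · rw [embMat_eq]
      exact hpsd.mul_mul_conjTranspose_same _
    · rw [mulVec_col]
      funext o
      show embMat i t Y o none = embMat i t Y o o
      rcases ho : embO i t o with _ | r1
      · simp [embMat, ho]
      · simp [embMat, ho, embO_none]
        exact (hd r1).symm ▸ (hd r1)
    · intro v
      by_cases hvi : v.1 = i
      · by_cases hvt : t = true ∧ v.2 = 1
        · have hv := embO_one hvi hvt
          constructor
          · rw [mulVec_col]
            have heq : (fun o => embMat i t Y o (some v)) = elemV 1 (embPt i t x) := by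
              funext o
              rcases o with _ | u
              · simpa [embMat, embO_none, hv, elemV] using hY0 none
              · by_cases hui : u.1 = i
                · by_cases hut : t = true ∧ u.2 = 1
                  · have e1 : embO i t (some u) = some none := embO_one hui hut
                    have e2 : embPt i t x u = 1 := by simp [embPt, hui, hut]
                    simpa [embMat, e1, hv, elemV, e2] using hY0 none
                  · simp [embMat, embO_zero hui hut, hv, elemV, embPt, hui, hut]
                · simpa [embMat, embO_old hui, hv, elemV, embPt, hui] using hY0 (some (unembV i u.1, u.2))
            rw [heq]
            exact elem_mem_lsCone zero_le_one hembq
          · rw [mulVec_col_sub]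
            have heq : (fun o => embMat i t Y o none - embMat i t Y o (some v))
                = elemV 0 (embPt i t x) := by
              funext o
              rcases ho : embO i t o with _ | r1 <;>
                simp [embMat, ho, hv, embO_none, elemV] <;>
                cases o <;> simp [elemV]
            rw [heq]
            exact elem_mem_lsCone le_rfl hembq
        · have hv := embO_zero hvi hvt
          constructor
          · rw [mulVec_col]
            have heq : (fun o => embMat i t Y o (some v)) = elemV 0 (embPt i t x) := by
              funext o
              rcases ho : embO i t o with _ | r1 <;>
                simp [embMat, ho, hv, elemV] <;> cases o <;> simp [elemV]
            rw [heq]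
            exact elem_mem_lsCone le_rfl hembq
          · rw [mulVec_col_sub]
            have heq : (fun o => embMat i t Y o none - embMat i t Y o (some v))
                = elemV 1 (embPt i t x) := by
              funext o
              rcases o with _ | u
              · simpa [embMat, embO_none, hv, elemV] using hY0 none
              · by_cases hui : u.1 = i
                · by_cases hut : t = true ∧ u.2 = 1
                  · have e1 : embO i t (some u) = some none := embO_one hui hut
                    have e2 : embPt i t x u = 1 := by simp [embPt, hui, hut]
                    simpa [embMat, e1, hv, elemV, e2, embO_none] using hY0 none
                  · simp [embMat, embO_zero hui hut, hv, elemV, embPt, hui, hut]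
                · simpa [embMat, embO_old hui, hv, elemV, embPt, hui, embO_none] using hY0 (some (unembV i u.1, u.2))
            rw [heq]
            exact elem_mem_lsCone zero_le_one hembq
      · -- old vertex
        obtain ⟨⟨l1, y1, hl1, hy1, hc1⟩, ⟨l2, y2, hl2, hy2, hc2⟩⟩ := hcols (unembV i v.1, v.2)
        rw [mulVec_col] at hc1
        rw [mulVec_col_sub] at hc2
        have hc1' : ∀ o, Y o (some (unembV i v.1, v.2))
            = (Option.elim o l1 fun u => l1 * y1 u : ℝ) := congrFun hc1
        have hc2' : ∀ o, Y o none - Y o (some (unembV i v.1, v.2))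
            = (Option.elim o l2 fun u => l2 * y2 u : ℝ) := congrFun hc2
        have hv := embO_old (i := i) (t := t) hvi
        constructor
        · rw [mulVec_col]
          have heq : (fun o => embMat i t Y o (some v)) = elemV l1 (embPt i t y1) := by
            funext o
            rcases o with _ | u
            · simpa [embMat, embO_none, hv, elemV] using hc1' none
            · by_cases hui : u.1 = i
              · by_cases hut : t = true ∧ u.2 = 1
                · have e1 : embO i t (some u) = some none := embO_one hui hut
                  have e2 : embPt i t y1 u = 1 := by simp [embPt, hui, hut]
                  simpa [embMat, e1, hv, elemV, e2] using hc1' none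
                · simp [embMat, embO_zero hui hut, hv, elemV, embPt, hui, hut]
              · simpa [embMat, embO_old hui, hv, elemV, embPt, hui] using hc1' (some (unembV i u.1, u.2))
          rw [heq]
          exact elem_mem_lsCone hl1 (ih y1 hy1)
        · rw [mulVec_col_sub]
          have heq : (fun o => embMat i t Y o none - embMat i t Y o (some v))
              = elemV l2 (embPt i t y2) := by
            funext o
            rcases o with _ | u
            · simpa [embMat, embO_none, hv, elemV] using hc2' none
            · by_cases hui : u.1 = i
              · by_cases hut : t = true ∧ u.2 = 1
                · have e1 : embO i t (some u) = some none := embO_one hui hut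
                  have e2 : embPt i t y2 u = 1 := by simp [embPt, hui, hut]
                  simpa [embMat, e1, hv, elemV, e2, embO_none] using hc2' none
                · simp [embMat, embO_zero hui hut, hv, elemV, embPt, hui, hut]
              · simpa [embMat, embO_old hui, hv, elemV, embPt, hui, embO_none] using hc2' (some (unembV i u.1, u.2))
          rw [heq]
          exact elem_mem_lsCone hl2 (ih y2 hy2)
    · rw [mulVec_col]
      funext o
      rcases o with _ | u
      · simpa [embMat, embO_none] using hY0 none
      · by_cases hui : u.1 = i
        · by_cases hut : t = true ∧ u.2 = 1
          · have e1 : embO i t (some u) = some none := embO_one hui hut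
            have e2 : embPt i t x u = 1 := by simp [embPt, hui, hut]
            simpa [embMat, e1, embO_none, e2] using hY0 none
          · simp [embMat, embO_zero hui hut, embO_none, embPt, hui, hut]
        · simpa [embMat, embO_old hui, embO_none, embPt, hui] using hY0 (some (unembV i u.1, u.2))
end EmbedIter2

section Gens

def chiF (k : ℕ) (s : Fin 3) : Fin k × Fin 3 → ℝ := fun v => if v.2 = s then 1 else 0

def etaF (k : ℕ) (i : Fin k) : Fin k × Fin 3 → ℝ :=
  fun v => if v.1 = i then (if v.2 = 1 then 0 else 1) else (if v.2 = 1 then 1 else 0)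

def nuF (k : ℕ) (i : Fin k) : Fin k × Fin 3 → ℝ :=
  fun v => if v.1 = i then 0 else (if v.2 = 1 then 1 else 0)

lemma chiF_mem (k : ℕ) (s : Fin 3) (q : ℕ) :
    chiF k s ∈ (lsPlus (V := Fin k × Fin 3))^[q] (FRAC (Hgraph k)) := by
  refine binary_mem_iter (fun v => by unfold chiF; split <;> simp) ⟨fun v => ?_, fun u v h => ?_⟩ q
  · unfold chiF; split <;> norm_num
  · have hne := adj_snd_ne h
    unfold chiF
    split_ifs with h1 h2 h2
    · exact absurd (h1.trans h2.symm) hne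
    all_goals norm_num

lemma zeroF_mem (k : ℕ) (q : ℕ) :
    (fun _ => (0:ℝ)) ∈ (lsPlus (V := Fin k × Fin 3))^[q] (FRAC (Hgraph k)) := by
  refine binary_mem_iter (fun v => Or.inl rfl) ⟨fun v => by norm_num, fun u v h => by norm_num⟩ q

lemma etaF_mem (k : ℕ) (i : Fin k) (q : ℕ) :
    etaF k i ∈ (lsPlus (V := Fin k × Fin 3))^[q] (FRAC (Hgraph k)) := by
  refine binary_mem_iter (fun v => by unfold etaF; split_ifs <;> simp) ⟨fun v => ?_, fun u v h => ?_⟩ q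
  · unfold etaF; split_ifs <;> norm_num
  · obtain ⟨hne, hcase⟩ := hgraph_adj.mp h
    unfold etaF
    rcases hcase with ⟨h1, hp⟩ | ⟨h1, hp⟩
    · -- same block: one of the two has snd = 1
      by_cases hui : u.1 = i
      · have hvi : v.1 = i := h1 ▸ hui
        simp only [hui, hvi, if_pos]
        rcases hp with ⟨ha, hb⟩ | ⟨ha, hb⟩ | ⟨ha, hb⟩ | ⟨ha, hb⟩ <;>
          rw [ha, hb] <;> norm_num [show ((2:Fin 3) = 1) ↔ False from by decide,
            show ((0:Fin 3) = 1) ↔ False from by decide]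
      · have hvi : v.1 ≠ i := fun hh => hui (h1.trans hh)
        simp only [hui, hvi, if_neg, ite_false]
        rcases hp with ⟨ha, hb⟩ | ⟨ha, hb⟩ | ⟨ha, hb⟩ | ⟨ha, hb⟩ <;>
          rw [ha, hb] <;> norm_num [show ((2:Fin 3) = 1) ↔ False from by decide,
            show ((0:Fin 3) = 1) ↔ False from by decide]
    · -- cross block: both snd ∈ {0,2}
      have hu2 : u.2 ≠ 1 := by
        rcases hp with ⟨ha, _⟩ | ⟨_, hb⟩
        · rw [ha]; decide
        · rw [hb]; decide
      have hv2 : v.2 ≠ 1 := by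
        rcases hp with ⟨_, hb⟩ | ⟨ha, _⟩
        · rw [hb]; decide
        · rw [ha]; decide
      by_cases hui : u.1 = i
      · have hvi : v.1 ≠ i := fun hh => h1 (hui.trans hh.symm)
        simp [hui, hvi, hu2, hv2]
      · by_cases hvi : v.1 = i
        · simp [hui, hvi, hu2, hv2]
        · simp [hui, hvi, hu2, hv2]

lemma nuF_mem (k : ℕ) (i : Fin k) (q : ℕ) :
    nuF k i ∈ (lsPlus (V := Fin k × Fin 3))^[q] (FRAC (Hgraph k)) := by
  refine binary_mem_iter (fun v => by unfold nuF; split_ifs <;> simp) ⟨fun v => ?_, fun u v h => ?_⟩ q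
  · unfold nuF; split_ifs <;> norm_num
  · have hne := adj_snd_ne h
    unfold nuF
    by_cases hu : u.1 = i <;> by_cases hv : v.1 = i <;> simp only [hu, hv, if_pos, if_neg, ite_true, ite_false]
    · norm_num
    · split <;> norm_num
    · split <;> norm_num
    · by_cases hu2 : u.2 = 1
      · have hv2 : v.2 ≠ 1 := fun hh => hne (hu2.trans hh.symm)
        simp [hu2, hv2]
      · simp only [hu2, ite_false, zero_add]
        split <;> norm_num

end Gens

lemma c_nonneg {m : ℕ} {a b c d : ℝ} (h1 : (Wmat (m+2) a b c d).PosSemidef) : 0 ≤ c := by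
  classical
  set z : Option (Fin (m+2) × Fin 3) → ℝ :=
    fun o => o.elim 0 (fun v => if v.2 = 0 then 1 else if v.2 = 2 then -1 else 0) with hz
  have hq := h1.dotProduct_mulVec_nonneg z
  have key : ∀ i j : Fin (m+2),
      (∑ p : Fin 3, ∑ r : Fin 3, z (some (i,p)) *
        (Wmat (m+2) a b c d (some (i,p)) (some (j,r)) * z (some (j,r)))) = 2*c := by
    intro i j
    by_cases hij : i = j <;>
      simp [Fin.sum_univ_three, hz, Wmat, hij] <;> ring
  have e1 : dotProduct (star z) ((Wmat (m+2) a b c d).mulVec z)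
      = ∑ i : Fin (m+2), ∑ j : Fin (m+2), (2*c : ℝ) := by
    calc dotProduct (star z) ((Wmat (m+2) a b c d).mulVec z)
        = ∑ o, z o * ∑ o', Wmat (m+2) a b c d o o' * z o' := by
          simp [dotProduct, Matrix.mulVec, star_trivial]
      _ = ∑ o, ∑ o', z o * (Wmat (m+2) a b c d o o' * z o') := by
          refine Finset.sum_congr rfl fun o _ => ?_
          rw [Finset.mul_sum]
      _ = ∑ v : Fin (m+2) × Fin 3, ∑ u : Fin (m+2) × Fin 3,
            z (some v) * (Wmat (m+2) a b c d (some v) (some u) * z (some u)) := by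
          rw [Fintype.sum_option]
          simp only [hz, Option.elim, zero_mul, mul_zero, Finset.sum_const_zero, zero_add]
          refine Finset.sum_congr rfl fun v _ => ?_
          rw [Fintype.sum_option]
          simp
      _ = ∑ i : Fin (m+2), ∑ p : Fin 3, ∑ j : Fin (m+2), ∑ r : Fin 3,
            z (some (i,p)) * (Wmat (m+2) a b c d (some (i,p)) (some (j,r)) * z (some (j,r))) := by
          rw [Fintype.sum_prod_type]
          refine Finset.sum_congr rfl fun i _ => Finset.sum_congr rfl fun p _ => ?_
          rw [Fintype.sum_prod_type]
      _ = ∑ i : Fin (m+2), ∑ j : Fin (m+2), ∑ p : Fin 3, ∑ r : Fin 3,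
            z (some (i,p)) * (Wmat (m+2) a b c d (some (i,p)) (some (j,r)) * z (some (j,r))) := by
          refine Finset.sum_congr rfl fun i _ => ?_
          exact Finset.sum_comm
      _ = ∑ i : Fin (m+2), ∑ j : Fin (m+2), (2*c : ℝ) := by
          exact Finset.sum_congr rfl fun i _ => Finset.sum_congr rfl fun j _ => key i j
  rw [e1] at hq
  simp only [Finset.sum_const, Finset.card_univ, Fintype.card_fin, nsmul_eq_mul] at hq
  have hpos : (0:ℝ) < ((m+2 : ℕ) : ℝ) := by positivity
  nlinarith [hq, hpos, mul_pos hpos hpos]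

theorem Hk_recursive_certificate (k p : ℕ) (hk : 3 ≤ k) (hp : 1 ≤ p)
    (a b c d : ℝ) (hb : 0 < b) (hac : a + c < 1)
    (h1 : (Wmat k a b c d).PosSemidef)
    (h2 : 2 * b + 2 * c - d ≤ 1)
    (h3 : wVec (k - 1) ((a - c) / b) (d / b) ∈
      (lsPlus (V := Fin (k - 1) × Fin 3))^[p - 1] (FRAC (Hgraph (k - 1))))
    (h4 : wVec (k - 1) ((a - c) / (1 - a - c)) ((b - a + c) / (1 - a - c)) ∈
      (lsPlus (V := Fin (k - 1) × Fin 3))^[p - 1] (FRAC (Hgraph (k - 1)))) :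
    wVec k a b ∈ (lsPlus (V := Fin k × Fin 3))^[p] (FRAC (Hgraph k)) := by
  obtain ⟨m, rfl⟩ : ∃ m, k = m + 2 := ⟨k - 2, by omega⟩
  obtain ⟨q, rfl⟩ : ∃ q, p = q + 1 := ⟨p - 1, by omega⟩
  have h3' : wVec (m+1) ((a-c)/b) (d/b) ∈
      (lsPlus (V := Fin (m+1) × Fin 3))^[q] (FRAC (Hgraph (m+1))) := h3
  have h4' : wVec (m+1) ((a-c)/(1-a-c)) ((b-a+c)/(1-a-c)) ∈
      (lsPlus (V := Fin (m+1) × Fin 3))^[q] (FRAC (Hgraph (m+1))) := h4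
  have hbne : b ≠ 0 := ne_of_gt hb
  have hepos : (0:ℝ) < 1 - a - c := by linarith
  have hene : (1:ℝ) - a - c ≠ 0 := ne_of_gt hepos
  have hf3 := iter_subset_frac (Hgraph (m+1)) q h3'
  have hf4 := iter_subset_frac (Hgraph (m+1)) q h4'
  have hac0 : 0 ≤ a - c := by
    have h := (hf3.1 ((0 : Fin (m+1)), (0 : Fin 3))).1
    simp only [wVec] at h
    rw [if_neg (by decide)] at h
    have := mul_nonneg h hb.le
    rwa [div_mul_cancel₀ _ hbne] at this
  have hd0 : 0 ≤ d := by
    have h := (hf3.1 ((0 : Fin (m+1)), (1 : Fin 3))).1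
    simp only [wVec] at h
    rw [if_pos (by decide)] at h
    have := mul_nonneg h hb.le
    rwa [div_mul_cancel₀ _ hbne] at this
  have hedge3 : a - c + d ≤ b := by
    have h := hf3.2 _ _ (adj01 (0 : Fin (m+1)))
    simp only [wVec] at h
    rw [if_neg (by decide), if_pos (by decide), ← add_div, div_le_one hb] at h
    linarith
  have hble : b ≤ 1 - a - c := by
    have h := hf4.2 _ _ (adj01 (0 : Fin (m+1)))
    simp only [wVec] at h
    rw [if_neg (by decide), if_pos (by decide), ← add_div, div_le_one hepos] at h
    linarith
  have hc0 : 0 ≤ c := c_nonneg h1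
  have hQconv := iter_convex (Hgraph (m+2)) q
  have hchi0 := chiF_mem (m+2) 0 q
  have hchi2 := chiF_mem (m+2) 2 q
  have hzero := zeroF_mem (m+2) q
  have hA : ∀ i : Fin (m+2), embPt i true (wVec (m+1) ((a-c)/b) (d/b)) ∈
      (lsPlus (V := Fin (m+2) × Fin 3))^[q] (FRAC (Hgraph (m+2))) :=
    fun i => embPt_iter i true q _ h3'
  have h4t : ∀ i : Fin (m+2), embPt i true (wVec (m+1) ((a-c)/(1-a-c)) ((b-a+c)/(1-a-c))) ∈
      (lsPlus (V := Fin (m+2) × Fin 3))^[q] (FRAC (Hgraph (m+2))) :=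
    fun i => embPt_iter i true q _ h4'
  have h4f : ∀ i : Fin (m+2), embPt i false (wVec (m+1) ((a-c)/(1-a-c)) ((b-a+c)/(1-a-c))) ∈
      (lsPlus (V := Fin (m+2) × Fin 3))^[q] (FRAC (Hgraph (m+2))) :=
    fun i => embPt_iter i false q _ h4'
  rw [Function.iterate_succ_apply']
  refine ⟨Wmat (m+2) a b c d, ⟨h1, ?_, ?_⟩, ?_⟩
  · rw [mulVec_col]
    funext o
    rcases o with _ | ⟨j, r⟩
    · simp [Wmat, Matrix.diag]
    · simp [Wmat, Matrix.diag]
  · rintro ⟨i, s⟩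
    rcases fin3cases s with rfl | rfl | rfl
    · constructor
      · rw [mulVec_col]
        have heq : (fun o => Wmat (m+2) a b c d o (some (i, 0)))
            = elemV c (chiF (m+2) 0) + elemV (a-c) (etaF (m+2) i) := by
          funext o
          rcases o with _ | ⟨j, r⟩
          · simp only [Wmat, elemV, chiF, etaF, Pi.add_apply, Option.elim]
            norm_num [show ((2:Fin 3) = 1) ↔ False from by decide, show ((0:Fin 3) = 1) ↔ False from by decide] <;> ring
          · by_cases hji : j = i
            · subst hji
              rcases fin3cases r with rfl | rfl | rfl <;>
                simp [Wmat, elemV, chiF, etaF, Pi.add_apply] <;> ring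
            · rcases fin3cases r with rfl | rfl | rfl <;>
                simp [Wmat, elemV, chiF, etaF, Pi.add_apply, hji] <;> ring
        rw [heq]
        exact lsCone_add hQconv (elem_mem_lsCone hc0 hchi0)
          (elem_mem_lsCone hac0 (etaF_mem (m+2) i q))
      · rw [mulVec_col_sub]
        have heq : (fun o => Wmat (m+2) a b c d o none - Wmat (m+2) a b c d o (some (i, 0)))
            = elemV b (embPt i true (wVec (m+1) ((a-c)/(1-a-c)) ((b-a+c)/(1-a-c))))
              + (elemV (1-a-c-b) (embPt i false (wVec (m+1) ((a-c)/(1-a-c)) ((b-a+c)/(1-a-c))))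
              + elemV c (chiF (m+2) 2)) := by
          funext o
          rcases o with _ | ⟨j, r⟩
          · simp only [Wmat, elemV, chiF, embPt, Pi.add_apply, Option.elim]
            norm_num [show ((2:Fin 3) = 1) ↔ False from by decide, show ((0:Fin 3) = 1) ↔ False from by decide] <;> ring
          · by_cases hji : j = i
            · subst hji
              rcases fin3cases r with rfl | rfl | rfl <;>
                simp [Wmat, elemV, chiF, embPt, wVec, Pi.add_apply] <;> field_simp <;> ring
            · rcases fin3cases r with rfl | rfl | rfl <;>
                simp [Wmat, elemV, chiF, embPt, wVec, Pi.add_apply, hji] <;> field_simp <;> ring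
        rw [heq]
        exact lsCone_add hQconv (elem_mem_lsCone hb.le (h4t i))
          (lsCone_add hQconv (elem_mem_lsCone (by linarith) (h4f i))
            (elem_mem_lsCone hc0 hchi2))
    · constructor
      · rw [mulVec_col]
        have heq : (fun o => Wmat (m+2) a b c d o (some (i, 1)))
            = elemV b (embPt i true (wVec (m+1) ((a-c)/b) (d/b))) := by
          funext o
          rcases o with _ | ⟨j, r⟩
          · simp only [Wmat, elemV, Option.elim]
            norm_num [show ((2:Fin 3) = 1) ↔ False from by decide, show ((0:Fin 3) = 1) ↔ False from by decide] <;> ring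
          · by_cases hji : j = i
            · subst hji
              rcases fin3cases r with rfl | rfl | rfl <;>
                simp [Wmat, elemV, embPt, wVec] <;> field_simp <;> ring
            · rcases fin3cases r with rfl | rfl | rfl <;>
                simp [Wmat, elemV, embPt, wVec, hji] <;> field_simp <;> ring
        rw [heq]
        exact elem_mem_lsCone hb.le (hA i)
      · rw [mulVec_col_sub]
        have heq : (fun o => Wmat (m+2) a b c d o none - Wmat (m+2) a b c d o (some (i, 1)))
            = elemV (a-c) (etaF (m+2) i) + (elemV c (chiF (m+2) 0) + (elemV c (chiF (m+2) 2)
              + (elemV (b-d-(a-c)) (nuF (m+2) i) + elemV (1-2*b-2*c+d) (fun _ => 0)))) := by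
          funext o
          rcases o with _ | ⟨j, r⟩
          · simp only [Wmat, elemV, chiF, etaF, nuF, Pi.add_apply, Option.elim]
            norm_num [show ((2:Fin 3) = 1) ↔ False from by decide, show ((0:Fin 3) = 1) ↔ False from by decide] <;> ring
          · by_cases hji : j = i
            · subst hji
              rcases fin3cases r with rfl | rfl | rfl <;>
                simp [Wmat, elemV, chiF, etaF, nuF, Pi.add_apply] <;> ring
            · rcases fin3cases r with rfl | rfl | rfl <;>
                simp [Wmat, elemV, chiF, etaF, nuF, Pi.add_apply, hji] <;> ring
        rw [heq]
        refine lsCone_add hQconv (elem_mem_lsCone hac0 (etaF_mem (m+2) i q))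
          (lsCone_add hQconv (elem_mem_lsCone hc0 hchi0)
            (lsCone_add hQconv (elem_mem_lsCone hc0 hchi2)
              (lsCone_add hQconv (elem_mem_lsCone (by linarith) (nuF_mem (m+2) i q))
                (elem_mem_lsCone (by linarith) hzero))))
    · constructor
      · rw [mulVec_col]
        have heq : (fun o => Wmat (m+2) a b c d o (some (i, 2)))
            = elemV c (chiF (m+2) 2) + elemV (a-c) (etaF (m+2) i) := by
          funext o
          rcases o with _ | ⟨j, r⟩
          · simp only [Wmat, elemV, chiF, etaF, Pi.add_apply, Option.elim]
            norm_num [show ((2:Fin 3) = 1) ↔ False from by decide, show ((0:Fin 3) = 1) ↔ False from by decide] <;> ring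
          · by_cases hji : j = i
            · subst hji
              rcases fin3cases r with rfl | rfl | rfl <;>
                simp [Wmat, elemV, chiF, etaF, Pi.add_apply] <;> ring
            · rcases fin3cases r with rfl | rfl | rfl <;>
                simp [Wmat, elemV, chiF, etaF, Pi.add_apply, hji] <;> ring
        rw [heq]
        exact lsCone_add hQconv (elem_mem_lsCone hc0 hchi2)
          (elem_mem_lsCone hac0 (etaF_mem (m+2) i q))
      · rw [mulVec_col_sub]
        have heq : (fun o => Wmat (m+2) a b c d o none - Wmat (m+2) a b c d o (some (i, 2)))
            = elemV b (embPt i true (wVec (m+1) ((a-c)/(1-a-c)) ((b-a+c)/(1-a-c))))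
              + (elemV (1-a-c-b) (embPt i false (wVec (m+1) ((a-c)/(1-a-c)) ((b-a+c)/(1-a-c))))
              + elemV c (chiF (m+2) 0)) := by
          funext o
          rcases o with _ | ⟨j, r⟩
          · simp only [Wmat, elemV, chiF, embPt, Pi.add_apply, Option.elim]
            norm_num [show ((2:Fin 3) = 1) ↔ False from by decide, show ((0:Fin 3) = 1) ↔ False from by decide] <;> ring
          · by_cases hji : j = i
            · subst hji
              rcases fin3cases r with rfl | rfl | rfl <;>
                simp [Wmat, elemV, chiF, embPt, wVec, Pi.add_apply] <;> field_simp <;> ring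
            · rcases fin3cases r with rfl | rfl | rfl <;>
                simp [Wmat, elemV, chiF, embPt, wVec, Pi.add_apply, hji] <;> field_simp <;> ring
        rw [heq]
        exact lsCone_add hQconv (elem_mem_lsCone hb.le (h4t i))
          (lsCone_add hQconv (elem_mem_lsCone (by linarith) (h4f i))
            (elem_mem_lsCone hc0 hchi0))
  · rw [mulVec_col]
    funext o
    rcases o with _ | ⟨j, r⟩ <;> simp [Wmat, wVec]
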